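/- For jointly centered bivariate Gaussian (X, Y) with correlation ρ and unit variances, E[sign(X)·sign(Y)] = (2/π)·arcsin(ρ) (the arcsine law for one-bit quantization). -/

import Mathlib

open MeasureTheory ProbabilityTheory Real Set
open scoped NNReal ENNReal

lemma measurable_realSign : Measurable Real.sign := by
  unfold Real.sign
  exact Measurable.ite (measurableSet_lt measurable_id measurable_const) measurable_const
    (Measurable.ite (measurableSet_lt measurable_const measurable_id) measurable_const
      measurable_const)

lemma sign_mul_pos {r : ℝ} (hr : 0 < r) (x : ℝ) : Real.sign (r * x) = Real.sign x := by
  rcases lt_trichotomy x 0 with h | h | h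
  · rw [Real.sign_of_neg h, Real.sign_of_neg (mul_neg_of_pos_of_neg hr h)]
  · simp [h]
  · rw [Real.sign_of_pos h, Real.sign_of_pos (mul_pos hr h)]

lemma integral_const_on_Ioo {f : ℝ → ℝ} {a b c : ℝ} (hab : a ≤ b)
    (h : ∀ x ∈ Set.Ioo a b, f x = c) :
    ∫ x in a..b, f x = (b - a) * c := by
  rw [intervalIntegral.integral_of_le hab, integral_Ioc_eq_integral_Ioo,
    setIntegral_congr_fun measurableSet_Ioo h, setIntegral_const, Real.volume_real_Ioo_of_le hab,
    smul_eq_mul]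

lemma intervalIntegrable_of_const_on_Ioo {f : ℝ → ℝ} {a b c : ℝ} (hab : a ≤ b)
    (h : ∀ x ∈ Set.Ioo a b, f x = c) : IntervalIntegrable f volume a b := by
  rw [intervalIntegrable_iff_integrableOn_Ioc_of_le hab, IntegrableOn,
    ← Measure.restrict_congr_set Ioo_ae_eq_Ioc]
  exact (integrableOn_const measure_Ioo_lt_top.ne).congr_fun
    (fun x hx => (h x hx).symm) measurableSet_Ioo

lemma radial : ∫ r in Set.Ioi (0:ℝ), r * Real.exp (-r ^ 2 / 2) = 1 := by
  have hderiv : ∀ x ∈ Set.Ici (0:ℝ),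
      HasDerivAt (fun r : ℝ => -Real.exp (-r ^ 2 / 2)) (x * Real.exp (-x ^ 2 / 2)) x := by
    intro x _
    have h1 : HasDerivAt (fun r : ℝ => -r ^ 2 / 2) (-x) x := by
      have := ((hasDerivAt_pow 2 x).neg).div_const 2
      simpa using this.congr_deriv (by ring)
    have := (h1.exp).neg
    exact this.congr_deriv (by ring)
  have hint : IntegrableOn (fun r : ℝ => r * Real.exp (-r ^ 2 / 2)) (Set.Ioi 0) := by
    have := (integrable_rpow_mul_exp_neg_mul_sq (b := (1:ℝ)/2) (by norm_num)
      (s := 1) (by norm_num)).integrableOn (s := Set.Ioi (0:ℝ))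
    refine this.congr_fun (fun x hx => ?_) measurableSet_Ioi
    dsimp only
    rw [Real.rpow_one]
    ring_nf
  have htend : Filter.Tendsto (fun r : ℝ => -Real.exp (-r ^ 2 / 2)) Filter.atTop (nhds 0) := by
    have h2 : Filter.Tendsto (fun r : ℝ => r ^ 2 / 2) Filter.atTop Filter.atTop :=
      (Filter.tendsto_pow_atTop (by norm_num)).atTop_div_const (by norm_num)
    have h3 : Filter.Tendsto (fun r : ℝ => -Real.exp (-r ^ 2 / 2)) Filter.atTop (nhds (-0)) := by
      refine Filter.Tendsto.neg ?_
      have := Real.tendsto_exp_neg_atTop_nhds_zero.comp h2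
      refine this.congr fun x => ?_
      simp [Function.comp, neg_div]
    simpa using h3
  have := integral_Ioi_of_hasDerivAt_of_tendsto' (a := 0)
    (fun x hx => hderiv x hx) hint htend
  simp at this
  exact this

lemma ang_pos {θ : ℝ} (h0 : 0 ≤ θ) (h1 : θ ≤ π / 2) :
    ∫ φ in (-π)..π, Real.sign (Real.cos φ) * Real.sign (Real.sin (θ + φ)) = 4 * θ := by
  have hπ := Real.pi_pos
  set f : ℝ → ℝ := fun φ => Real.sign (Real.cos φ) * Real.sign (Real.sin (θ + φ)) with hf
  -- piece values
  have hc1 : ∀ x ∈ Set.Ioo (-π) (-(π/2)), f x = 1 := by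
    intro x hx
    have hcos : Real.cos x < 0 := by
      rw [← Real.cos_neg]
      exact Real.cos_neg_of_pi_div_two_lt_of_lt (by linarith [hx.2]) (by linarith [hx.1])
    have hsin : Real.sin (θ + x) < 0 :=
      Real.sin_neg_of_neg_of_neg_pi_lt (by linarith [hx.2]) (by linarith [hx.1])
    rw [hf]; simp only [Real.sign_of_neg hcos, Real.sign_of_neg hsin]; ring
  have hc2 : ∀ x ∈ Set.Ioo (-(π/2)) (-θ), f x = -1 := by
    intro x hx
    have hcos : 0 < Real.cos x :=
      Real.cos_pos_of_mem_Ioo ⟨hx.1, by linarith [hx.2]⟩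
    have hsin : Real.sin (θ + x) < 0 :=
      Real.sin_neg_of_neg_of_neg_pi_lt (by linarith [hx.2]) (by linarith [hx.1])
    rw [hf]; simp only [Real.sign_of_pos hcos, Real.sign_of_neg hsin]; ring
  have hc3 : ∀ x ∈ Set.Ioo (-θ) (π/2), f x = 1 := by
    intro x hx
    have hcos : 0 < Real.cos x :=
      Real.cos_pos_of_mem_Ioo ⟨by linarith [hx.1], hx.2⟩
    have hsin : 0 < Real.sin (θ + x) :=
      Real.sin_pos_of_pos_of_lt_pi (by linarith [hx.1]) (by linarith [hx.2, Real.pi_gt_three])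
    rw [hf]; simp only [Real.sign_of_pos hcos, Real.sign_of_pos hsin]; ring
  have hc4 : ∀ x ∈ Set.Ioo (π/2) (π - θ), f x = -1 := by
    intro x hx
    have hcos : Real.cos x < 0 :=
      Real.cos_neg_of_pi_div_two_lt_of_lt hx.1 (by linarith [hx.2])
    have hsin : 0 < Real.sin (θ + x) :=
      Real.sin_pos_of_pos_of_lt_pi (by linarith [hx.1]) (by linarith [hx.2])
    rw [hf]; simp only [Real.sign_of_neg hcos, Real.sign_of_pos hsin]; ring
  have hc5 : ∀ x ∈ Set.Ioo (π - θ) π, f x = 1 := by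
    intro x hx
    have hcos : Real.cos x < 0 :=
      Real.cos_neg_of_pi_div_two_lt_of_lt (by linarith [hx.1]) (by linarith [hx.2])
    have hsin : Real.sin (θ + x) < 0 := by
      have hx1 : 0 < θ + x - π := by linarith [hx.1]
      have hx2 : θ + x - π < π := by linarith [hx.2]
      have := Real.sin_pos_of_pos_of_lt_pi hx1 hx2
      have heq : Real.sin (θ + x) = -Real.sin (θ + x - π) := by
        rw [← Real.sin_add_pi]; ring_nf
      rw [heq]; linarith
    rw [hf]; simp only [Real.sign_of_neg hcos, Real.sign_of_neg hsin]; ring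
  have o1 : (-π : ℝ) ≤ -(π/2) := by linarith
  have o2 : (-(π/2) : ℝ) ≤ -θ := by linarith
  have o3 : (-θ : ℝ) ≤ π/2 := by linarith
  have o4 : (π/2 : ℝ) ≤ π - θ := by linarith
  have o5 : (π - θ : ℝ) ≤ π := by linarith
  have i1 := intervalIntegrable_of_const_on_Ioo o1 hc1
  have i2 := intervalIntegrable_of_const_on_Ioo o2 hc2
  have i3 := intervalIntegrable_of_const_on_Ioo o3 hc3
  have i4 := intervalIntegrable_of_const_on_Ioo o4 hc4
  have i5 := intervalIntegrable_of_const_on_Ioo o5 hc5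
  have e1 := integral_const_on_Ioo o1 hc1
  have e2 := integral_const_on_Ioo o2 hc2
  have e3 := integral_const_on_Ioo o3 hc3
  have e4 := integral_const_on_Ioo o4 hc4
  have e5 := integral_const_on_Ioo o5 hc5
  have s45 := intervalIntegral.integral_add_adjacent_intervals i4 i5
  have s345 := intervalIntegral.integral_add_adjacent_intervals i3 (i4.trans i5)
  have s2345 := intervalIntegral.integral_add_adjacent_intervals i2 (i3.trans (i4.trans i5))
  have s12345 := intervalIntegral.integral_add_adjacent_intervals i1
    (i2.trans (i3.trans (i4.trans i5)))
  rw [← s12345, ← s2345, ← s345, ← s45, e1, e2, e3, e4, e5]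
  ring

lemma ang {θ : ℝ} (h0 : -(π/2) ≤ θ) (h1 : θ ≤ π / 2) :
    ∫ φ in (-π)..π, Real.sign (Real.cos φ) * Real.sign (Real.sin (θ + φ)) = 4 * θ := by
  rcases le_or_gt 0 θ with h | h
  · exact ang_pos h h1
  · have key := ang_pos (θ := -θ) (by linarith) (by linarith)
    have hneg : ∫ φ in (-π)..π, Real.sign (Real.cos φ) * Real.sign (Real.sin (θ + φ))
        = ∫ φ in (-π)..π, -(Real.sign (Real.cos φ) * Real.sign (Real.sin (-θ + φ))) := by
      have := intervalIntegral.integral_comp_neg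
        (a := -π) (b := π)
        (fun φ => Real.sign (Real.cos φ) * Real.sign (Real.sin (θ + φ)))
      rw [neg_neg] at this
      rw [← this]
      congr 1
      ext φ
      rw [Real.cos_neg]
      have : Real.sin (θ + -φ) = -Real.sin (-θ + φ) := by
        rw [← Real.sin_neg]; ring_nf
      rw [this, Real.sign_neg]
      ring
    rw [hneg, intervalIntegral.integral_neg, key]
    ring

lemma gauss_prod_eq :
    (gaussianReal 0 1).prod (gaussianReal 0 1)
      = (volume : Measure (ℝ × ℝ)).withDensity
          (fun p => ENNReal.ofReal (gaussianPDFReal 0 1 p.1)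
            * ENNReal.ofReal (gaussianPDFReal 0 1 p.2)) := by
  apply Measure.prod_eq
  intro s t hs ht
  rw [withDensity_apply _ (hs.prod ht), Measure.volume_eq_prod, ← Measure.prod_restrict,
    lintegral_prod_mul
      ((measurable_gaussianPDFReal 0 1).ennreal_ofReal.aemeasurable)
      ((measurable_gaussianPDFReal 0 1).ennreal_ofReal.aemeasurable),
    gaussianReal_apply 0 one_ne_zero s, gaussianReal_apply 0 one_ne_zero t]
  rfl

lemma integral_gauss_prod (F : ℝ × ℝ → ℝ) :
    ∫ p, F p ∂((gaussianReal 0 1).prod (gaussianReal 0 1))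
      = ∫ p : ℝ × ℝ, (gaussianPDFReal 0 1 p.1 * gaussianPDFReal 0 1 p.2) * F p := by
  rw [gauss_prod_eq]
  have hrw : (fun p : ℝ × ℝ => ENNReal.ofReal (gaussianPDFReal 0 1 p.1)
      * ENNReal.ofReal (gaussianPDFReal 0 1 p.2))
      = fun p : ℝ × ℝ => ((Real.toNNReal (gaussianPDFReal 0 1 p.1)
        * Real.toNNReal (gaussianPDFReal 0 1 p.2) : ℝ≥0) : ℝ≥0∞) := by
    funext p
    rw [ENNReal.coe_mul]
    rfl
  have hmeas : Measurable (fun p : ℝ × ℝ => Real.toNNReal (gaussianPDFReal 0 1 p.1)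
      * Real.toNNReal (gaussianPDFReal 0 1 p.2)) :=
    (((measurable_gaussianPDFReal 0 1).comp measurable_fst).real_toNNReal).mul
      (((measurable_gaussianPDFReal 0 1).comp measurable_snd).real_toNNReal)
  rw [hrw, integral_withDensity_eq_integral_smul hmeas]
  congr 1
  funext p
  rw [NNReal.smul_def, NNReal.coe_mul, Real.coe_toNNReal _ (gaussianPDFReal_nonneg 0 1 p.1),
    Real.coe_toNNReal _ (gaussianPDFReal_nonneg 0 1 p.2), smul_eq_mul]


/-- Arcsine law for one-bit quantization: for a centered bivariate Gaussian (X, Y) with unit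
variances and correlation ρ (represented via independent standard Gaussians),
E[sign(X)·sign(Y)] = (2/π)·arcsin(ρ). -/
theorem stmt13 (ρ : ℝ) (hρ : ρ ∈ Set.Icc (-1 : ℝ) 1)
    (μ : Measure (ℝ × ℝ)) (hμ : μ = (gaussianReal 0 1).prod (gaussianReal 0 1))
    (X Y : ℝ × ℝ → ℝ)
    (hX : ∀ p, X p = p.1)
    (hY : ∀ p, Y p = ρ * p.1 + Real.sqrt (1 - ρ ^ 2) * p.2) :
    ∫ p, Real.sign (X p) * Real.sign (Y p) ∂μ = (2 / Real.pi) * Real.arcsin ρ := by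
  have hπ := Real.pi_pos
  subst hμ
  set θ := Real.arcsin ρ with hθdef
  have hθ1 : -(π/2) ≤ θ := Real.neg_pi_div_two_le_arcsin ρ
  have hθ2 : θ ≤ π/2 := Real.arcsin_le_pi_div_two ρ
  have hsin : Real.sin θ = ρ := Real.sin_arcsin hρ.1 hρ.2
  have hcos : Real.cos θ = Real.sqrt (1 - ρ^2) := by
    rw [hθdef, Real.cos_arcsin]
  simp only [hX, hY]
  rw [integral_gauss_prod]
  rw [← integral_comp_polarCoord_symm]
  rw [show polarCoord.target = Set.Ioi (0:ℝ) ×ˢ Set.Ioo (-π) π from rfl]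
  have hg : ∀ x : ℝ, gaussianPDFReal 0 1 x = (Real.sqrt (2*π))⁻¹ * Real.exp (-x^2/2) := by
    intro x
    simp [gaussianPDFReal]
  have key : ∫ p in Set.Ioi (0:ℝ) ×ˢ Set.Ioo (-π) π,
      (fun p : ℝ × ℝ => p.1 • ((gaussianPDFReal 0 1 (polarCoord.symm p).1
          * gaussianPDFReal 0 1 (polarCoord.symm p).2)
        * (Real.sign (polarCoord.symm p).1
          * Real.sign (ρ * (polarCoord.symm p).1 + Real.sqrt (1 - ρ^2) * (polarCoord.symm p).2)))) p
      = ∫ p in Set.Ioi (0:ℝ) ×ˢ Set.Ioo (-π) π,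
        (fun p : ℝ × ℝ => (p.1 * Real.exp (-p.1^2/2))
          * ((2*π)⁻¹ * (Real.sign (Real.cos p.2) * Real.sign (Real.sin (θ + p.2))))) p := by
    apply setIntegral_congr_fun (measurableSet_Ioi.prod measurableSet_Ioo)
    intro p hp
    have hr : 0 < p.1 := hp.1
    have hsymm : polarCoord.symm p = (p.1 * Real.cos p.2, p.1 * Real.sin p.2) := rfl
    simp only [hsymm, hg]
    have hsq : (p.1 * Real.cos p.2)^2 + (p.1 * Real.sin p.2)^2 = p.1^2 := by
      have := Real.sin_sq_add_cos_sq p.2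
      nlinarith [this]
    have hexp : Real.exp (-(p.1 * Real.cos p.2)^2/2) * Real.exp (-(p.1 * Real.sin p.2)^2/2)
        = Real.exp (-p.1^2/2) := by
      rw [← Real.exp_add]
      congr 1
      rw [← add_div, ← neg_add, hsq]
    have hsign1 : Real.sign (p.1 * Real.cos p.2) = Real.sign (Real.cos p.2) :=
      sign_mul_pos hr _
    have hsign2 : Real.sign (ρ * (p.1 * Real.cos p.2)
        + Real.sqrt (1 - ρ^2) * (p.1 * Real.sin p.2)) = Real.sign (Real.sin (θ + p.2)) := by
      have harg : ρ * (p.1 * Real.cos p.2) + Real.sqrt (1 - ρ^2) * (p.1 * Real.sin p.2)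
          = p.1 * Real.sin (θ + p.2) := by
        rw [Real.sin_add, hsin, hcos]
        ring
      rw [harg, sign_mul_pos hr]
    have hsqrt : (Real.sqrt (2*π))⁻¹ * (Real.sqrt (2*π))⁻¹ = (2*π)⁻¹ := by
      rw [← mul_inv, Real.mul_self_sqrt (by positivity)]
    rw [hsign1, hsign2, smul_eq_mul]
    linear_combination p.1 * (Real.sign (Real.cos p.2) * Real.sign (Real.sin (θ + p.2)))
        * ((Real.sqrt (2*π))⁻¹ * (Real.sqrt (2*π))⁻¹) * hexp
      + p.1 * (Real.sign (Real.cos p.2) * Real.sign (Real.sin (θ + p.2)))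
        * Real.exp (-p.1^2/2) * hsqrt
  rw [key]
  rw [Measure.volume_eq_prod, ← Measure.prod_restrict]
  rw [integral_prod_mul (f := fun r : ℝ => r * Real.exp (-r^2/2))
    (g := fun φ : ℝ => (2*π)⁻¹ * (Real.sign (Real.cos φ) * Real.sign (Real.sin (θ + φ))))]
  rw [radial, one_mul, MeasureTheory.integral_const_mul, ← integral_Ioc_eq_integral_Ioo,
    ← intervalIntegral.integral_of_le (by linarith : -π ≤ π), ang hθ1 hθ2]
  field_simp
  ring
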